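/- Let N ≥ 2 and let U be a unitary on ℂ^N ⊗ ℂ^N. Then g_t(U) = 2 if and only if U is locally equivalent to the swap gate, i.e., there exist unitaries A, B on ℂ^N such that U = (A ⊗ B)·S. In particular g_t(S) = 2 and e_p(S) = 0. -/

import Mathlib

open Matrix MeasureTheory
open scoped Kronecker

noncomputable section

instance {m n R : Type*} [TopologicalSpace R] : MeasurableSpace (Matrix m n R) := borel _
instance {m n R : Type*} [TopologicalSpace R] : BorelSpace (Matrix m n R) := ⟨rfl⟩

/-- Reshuffling: `(U_R)_{(i,j),(α,β)} = U_{(i,α),(j,β)}`. -/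
def reshuffle (N : ℕ) (U : Matrix (Fin N × Fin N) (Fin N × Fin N) ℂ) :
    Matrix (Fin N × Fin N) (Fin N × Fin N) ℂ :=
  Matrix.of fun p q => U (p.1, q.1) (p.2, q.2)

/-- Partial transpose: `(U_Γ)_{(j,α),(i,β)} = U_{(i,α),(j,β)}`. -/
def ptransp (N : ℕ) (U : Matrix (Fin N × Fin N) (Fin N × Fin N) ℂ) :
    Matrix (Fin N × Fin N) (Fin N × Fin N) ℂ :=
  Matrix.of fun p q => U (q.1, p.2) (p.1, q.2)

/-- The swap gate `S(x ⊗ y) = y ⊗ x`. -/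
def swapGate (N : ℕ) : Matrix (Fin N × Fin N) (Fin N × Fin N) ℂ :=
  Matrix.of fun p q => if p.1 = q.2 ∧ p.2 = q.1 then 1 else 0

/-- `ρ_R(U) = U_R U_R† / N²`. -/
def rhoR (N : ℕ) (U : Matrix (Fin N × Fin N) (Fin N × Fin N) ℂ) :
    Matrix (Fin N × Fin N) (Fin N × Fin N) ℂ :=
  ((N : ℂ) ^ 2)⁻¹ • (reshuffle N U * (reshuffle N U)ᴴ)

/-- `ρ_T(U) = S U_Γ U_Γ† S / N²`. -/
def rhoT (N : ℕ) (U : Matrix (Fin N × Fin N) (Fin N × Fin N) ℂ) :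
    Matrix (Fin N × Fin N) (Fin N × Fin N) ℂ :=
  ((N : ℂ) ^ 2)⁻¹ • (swapGate N * (ptransp N U * (ptransp N U)ᴴ) * swapGate N)

/-- Purity `X(U) = tr(ρ_R(U)²)` (a real number). -/
def Xpur (N : ℕ) (U : Matrix (Fin N × Fin N) (Fin N × Fin N) ℂ) : ℝ :=
  ((rhoR N U * rhoR N U).trace).re

/-- Purity `Y(U) = tr(ρ_T(U)²)` (a real number). -/
def Ypur (N : ℕ) (U : Matrix (Fin N × Fin N) (Fin N × Fin N) ℂ) : ℝ :=
  ((rhoT N U * rhoT N U).trace).re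

/-- Entangling power `e_p(U)`. -/
def ep (N : ℕ) (U : Matrix (Fin N × Fin N) (Fin N × Fin N) ℂ) : ℝ :=
  ((N : ℝ) ^ 2 / ((N : ℝ) + 1) ^ 2) *
    ((1 - Xpur N U) + (1 - Ypur N U) - ((N : ℝ) ^ 2 - 1) / (N : ℝ) ^ 2)

/-- Gate typicality `g_t(U)`. -/
def gateTyp (N : ℕ) (U : Matrix (Fin N × Fin N) (Fin N × Fin N) ℂ) : ℝ :=
  ((N : ℝ) ^ 2 / ((N : ℝ) ^ 2 - 1)) *
    (Ypur N U - Xpur N U + ((N : ℝ) ^ 2 - 1) / (N : ℝ) ^ 2)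

/-- Mean entangling power over the Haar measure, `ē_p = (N-1)²/(N²+1)`. -/
def epBar (N : ℕ) : ℝ := ((N : ℝ) - 1) ^ 2 / ((N : ℝ) ^ 2 + 1)

/-- `iterGate U W k = U · W_{k-1} · U ⋯ W_0 · U`, i.e. `U^(k+1)` with `k` interlacing
local gates `W_0, …, W_{k-1}`. -/
def iterGate {D : Type*} [Fintype D] [DecidableEq D] (U : Matrix D D ℂ)
    (W : ℕ → Matrix D D ℂ) : ℕ → Matrix D D ℂ
  | 0 => U
  | k + 1 => U * W k * iterGate U W k

section Helpers
variable {N : ℕ}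

lemma swap_mul_apply (X : Matrix (Fin N × Fin N) (Fin N × Fin N) ℂ) (p q : Fin N × Fin N) :
    (swapGate N * X) p q = X (p.2, p.1) q := by
  rw [mul_apply, Finset.sum_eq_single (p.2, p.1)]
  · simp [swapGate]
  · rintro ⟨a, b⟩ - hb
    have : ¬(p.1 = b ∧ p.2 = a) := by
      rintro ⟨h1, h2⟩; exact hb (by simp [← h1, ← h2])
    simp [swapGate, this]
  · intro h; exact absurd (Finset.mem_univ _) h

lemma mul_swap_apply (X : Matrix (Fin N × Fin N) (Fin N × Fin N) ℂ) (p q : Fin N × Fin N) :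
    (X * swapGate N) p q = X p (q.2, q.1) := by
  rw [mul_apply, Finset.sum_eq_single (q.2, q.1)]
  · simp [swapGate]
  · rintro ⟨a, b⟩ - hb
    have : ¬(a = q.2 ∧ b = q.1) := by
      rintro ⟨h1, h2⟩; exact hb (by simp [h1, h2])
    simp [swapGate, this]
  · intro h; exact absurd (Finset.mem_univ _) h

lemma swapGate_conjTranspose : (swapGate N)ᴴ = swapGate N := by
  ext ⟨a, b⟩ ⟨c, d⟩
  simp only [conjTranspose_apply, swapGate, of_apply]
  have : (c = b ∧ d = a) ↔ (a = d ∧ b = c) := by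
    constructor <;> rintro ⟨h1, h2⟩ <;> exact ⟨h2.symm, h1.symm⟩
  rw [if_congr this rfl rfl]
  split_ifs <;> simp

lemma swapGate_mul_self : swapGate N * swapGate N = 1 := by
  ext p q
  rw [swap_mul_apply]
  simp [swapGate, one_apply, Prod.ext_iff, and_comm]

lemma trace_mul_conjTranspose_self {κ : Type*} [Fintype κ] (M : Matrix κ κ ℂ) :
    (M * Mᴴ).trace = ∑ z : κ × κ, M z.1 z.2 * star (M z.1 z.2) := by
  rw [Matrix.trace, Fintype.sum_prod_type]
  simp [Matrix.diag, mul_apply, conjTranspose_apply]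

lemma trace_reshuffle_mul (U : Matrix (Fin N × Fin N) (Fin N × Fin N) ℂ) :
    (reshuffle N U * (reshuffle N U)ᴴ).trace = (U * Uᴴ).trace := by
  rw [trace_mul_conjTranspose_self, trace_mul_conjTranspose_self]
  exact Fintype.sum_equiv (Equiv.prodProdProdComm (Fin N) (Fin N) (Fin N) (Fin N))
    _ _ (by rintro ⟨⟨i, α⟩, ⟨j, β⟩⟩; rfl)

def ptEquiv (N : ℕ) : ((Fin N × Fin N) × (Fin N × Fin N)) ≃ ((Fin N × Fin N) × (Fin N × Fin N)) where
  toFun z := ((z.2.1, z.1.2), (z.1.1, z.2.2))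
  invFun z := ((z.2.1, z.1.2), (z.1.1, z.2.2))
  left_inv := by rintro ⟨⟨i, α⟩, ⟨j, β⟩⟩; rfl
  right_inv := by rintro ⟨⟨i, α⟩, ⟨j, β⟩⟩; rfl

lemma trace_ptransp_mul (U : Matrix (Fin N × Fin N) (Fin N × Fin N) ℂ) :
    (ptransp N U * (ptransp N U)ᴴ).trace = (U * Uᴴ).trace := by
  rw [trace_mul_conjTranspose_self, trace_mul_conjTranspose_self]
  exact Fintype.sum_equiv (ptEquiv N) _ _ (by rintro ⟨⟨i, α⟩, ⟨j, β⟩⟩; rfl)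

lemma trace_mul_conjTranspose_of_unitary {U : Matrix (Fin N × Fin N) (Fin N × Fin N) ℂ}
    (hU : U ∈ Matrix.unitaryGroup (Fin N × Fin N) ℂ) :
    (U * Uᴴ).trace = (N : ℂ) ^ 2 := by
  have h1 : U * Uᴴ = 1 := Matrix.mem_unitaryGroup_iff.mp hU
  rw [h1, Matrix.trace_one]
  simp [sq]

end Helpers

section Purity

open scoped ComplexOrder

variable {ι : Type*} [Fintype ι] [DecidableEq ι]

lemma trace_eq_sum_eigs {ρ : Matrix ι ι ℂ} (h : ρ.IsHermitian) :
    ρ.trace = ∑ i, (h.eigenvalues i : ℂ) := by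
  have hV : (star (h.eigenvectorUnitary : Matrix ι ι ℂ)) * (h.eigenvectorUnitary : Matrix ι ι ℂ) = 1 :=
    Matrix.mem_unitaryGroup_iff'.mp h.eigenvectorUnitary.2
  conv_lhs => rw [h.spectral_theorem, Unitary.conjStarAlgAut_apply]
  rw [Matrix.trace_mul_cycle, hV, Matrix.one_mul, Matrix.trace_diagonal]
  rfl

lemma trace_sq_eq_sum_eigs_sq {ρ : Matrix ι ι ℂ} (h : ρ.IsHermitian) :
    (ρ * ρ).trace = ∑ i, (h.eigenvalues i : ℂ) ^ 2 := by
  have hV : (star (h.eigenvectorUnitary : Matrix ι ι ℂ)) * (h.eigenvectorUnitary : Matrix ι ι ℂ) = 1 :=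
    Matrix.mem_unitaryGroup_iff'.mp h.eigenvectorUnitary.2
  have hsq : ρ * ρ = (h.eigenvectorUnitary : Matrix ι ι ℂ) *
      (Matrix.diagonal (RCLike.ofReal ∘ h.eigenvalues) * Matrix.diagonal (RCLike.ofReal ∘ h.eigenvalues)) *
      (star (h.eigenvectorUnitary : Matrix ι ι ℂ)) := by
    conv_lhs => rw [h.spectral_theorem]
    calc (↑h.eigenvectorUnitary * Matrix.diagonal (RCLike.ofReal ∘ h.eigenvalues) * star (h.eigenvectorUnitary : Matrix ι ι ℂ)) *
        (↑h.eigenvectorUnitary * Matrix.diagonal (RCLike.ofReal ∘ h.eigenvalues) * star (h.eigenvectorUnitary : Matrix ι ι ℂ))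
        = ↑h.eigenvectorUnitary * Matrix.diagonal (RCLike.ofReal ∘ h.eigenvalues) *
          ((star (h.eigenvectorUnitary : Matrix ι ι ℂ) * ↑h.eigenvectorUnitary) * Matrix.diagonal (RCLike.ofReal ∘ h.eigenvalues)) *
          star (h.eigenvectorUnitary : Matrix ι ι ℂ) := by
          noncomm_ring
      _ = _ := by rw [hV, Matrix.one_mul]; noncomm_ring
  rw [hsq, Matrix.diagonal_mul_diagonal, Matrix.trace_mul_cycle, hV,
    Matrix.one_mul, Matrix.trace_diagonal]
  simp [sq]

lemma eigs_sum_one {ρ : Matrix ι ι ℂ} (h : ρ.IsHermitian) (htr : ρ.trace = 1) :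
    ∑ i, h.eigenvalues i = 1 := by
  have := trace_eq_sum_eigs h
  rw [htr] at this
  have : ((∑ i, h.eigenvalues i : ℝ) : ℂ) = ((1 : ℝ) : ℂ) := by push_cast; rw [← this]
  exact_mod_cast this

lemma purity_eq_sum_sq {ρ : Matrix ι ι ℂ} (h : ρ.IsHermitian) :
    ((ρ * ρ).trace).re = ∑ i, (h.eigenvalues i) ^ 2 := by
  rw [trace_sq_eq_sum_eigs_sq h]
  have : (∑ i, (h.eigenvalues i : ℂ) ^ 2) = ((∑ i, (h.eigenvalues i) ^ 2 : ℝ) : ℂ) := by push_cast; ring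
  rw [this, Complex.ofReal_re]

lemma purity_le_one {ρ : Matrix ι ι ℂ} (hP : ρ.PosSemidef) (htr : ρ.trace = 1) :
    ((ρ * ρ).trace).re ≤ 1 := by
  rw [purity_eq_sum_sq hP.1]
  have hnn : ∀ i, 0 ≤ hP.1.eigenvalues i := hP.eigenvalues_nonneg
  have hsum := eigs_sum_one hP.1 htr
  calc ∑ i, (hP.1.eigenvalues i) ^ 2 ≤ ∑ i, hP.1.eigenvalues i := by
        refine Finset.sum_le_sum fun i _ => ?_
        have hle : hP.1.eigenvalues i ≤ 1 := by
          rw [← hsum]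
          exact Finset.single_le_sum (fun j _ => hnn j) (Finset.mem_univ i)
        nlinarith [hnn i]
    _ = 1 := hsum

lemma card_mul_purity_ge {ρ : Matrix ι ι ℂ} (h : ρ.IsHermitian) (htr : ρ.trace = 1) :
    1 ≤ (Fintype.card ι : ℝ) * ((ρ * ρ).trace).re := by
  rw [purity_eq_sum_sq h]
  have hsum := eigs_sum_one h htr
  have := Finset.sum_mul_sq_le_sq_mul_sq Finset.univ h.eigenvalues (fun _ => (1 : ℝ))
  simp only [mul_one, one_pow] at this
  rw [hsum] at this
  calc (1:ℝ) = 1 ^ 2 := by norm_num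
    _ ≤ (∑ i, (h.eigenvalues i) ^ 2) * (∑ _i : ι, (1:ℝ)) := this
    _ = (Fintype.card ι : ℝ) * ∑ i, (h.eigenvalues i) ^ 2 := by
        simp [mul_comm, Finset.card_univ]

lemma purity_eq_one_rank_one {ρ : Matrix ι ι ℂ} (hP : ρ.PosSemidef) (htr : ρ.trace = 1)
    (hpur : ((ρ * ρ).trace).re = 1) :
    ∃ w : ι → ℂ, ρ = Matrix.vecMulVec w (star w) := by
  classical
  set h := hP.1 with hh
  have hnn : ∀ i, 0 ≤ h.eigenvalues i := hP.eigenvalues_nonneg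
  have hsum := eigs_sum_one h htr
  rw [purity_eq_sum_sq h] at hpur
  -- each eigenvalue is 0 or 1
  have hle1 : ∀ i, h.eigenvalues i ≤ 1 := fun i => by
    rw [← hsum]; exact Finset.single_le_sum (fun j _ => hnn j) (Finset.mem_univ i)
  have hzero : ∑ i, (h.eigenvalues i - (h.eigenvalues i) ^ 2) = 0 := by
    rw [Finset.sum_sub_distrib, hsum, hpur, sub_self]
  have h01 : ∀ i, h.eigenvalues i = 0 ∨ h.eigenvalues i = 1 := by
    have := (Finset.sum_eq_zero_iff_of_nonneg (fun i _ => by nlinarith [hnn i, hle1 i])).mp hzero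
    intro i
    have hi := this i (Finset.mem_univ i)
    have hfac : h.eigenvalues i * (1 - h.eigenvalues i) = 0 := by nlinarith [hi]
    rcases mul_eq_zero.mp hfac with h' | h'
    · exact Or.inl h'
    · right; linarith
  -- find the single index with eigenvalue 1
  have hex : ∃ i0, h.eigenvalues i0 ≠ 0 := by
    by_contra hc
    push_neg at hc
    rw [Finset.sum_eq_zero (fun i _ => hc i)] at hsum
    norm_num at hsum
  obtain ⟨i0, hi0⟩ := hex
  have hi01 : h.eigenvalues i0 = 1 := (h01 i0).resolve_left hi0
  have hrest : ∀ j, j ≠ i0 → h.eigenvalues j = 0 := by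
    have hsplit : h.eigenvalues i0 + ∑ j ∈ Finset.univ.erase i0, h.eigenvalues j = 1 := by
      rw [Finset.add_sum_erase _ _ (Finset.mem_univ i0)]; exact hsum
    have hz : ∑ j ∈ Finset.univ.erase i0, h.eigenvalues j = 0 := by
      rw [hi01] at hsplit; linarith
    intro j hj
    exact (Finset.sum_eq_zero_iff_of_nonneg (fun k _ => hnn k)).mp hz j
      (Finset.mem_erase.mpr ⟨hj, Finset.mem_univ j⟩)
  refine ⟨fun p => (h.eigenvectorUnitary : Matrix ι ι ℂ) p i0, ?_⟩
  ext p q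
  rw [Matrix.vecMulVec_apply]
  conv_lhs => rw [h.spectral_theorem, Unitary.conjStarAlgAut_apply]
  rw [Matrix.mul_apply]
  rw [Finset.sum_eq_single i0]
  · rw [Matrix.mul_apply, Finset.sum_eq_single i0]
    · simp [Matrix.diagonal_apply, hi01, Pi.star_apply]
    · intro k _ hk
      simp [Matrix.diagonal_apply, Function.comp, hrest k hk]
    · intro hmem; exact absurd (Finset.mem_univ _) hmem
  · intro k _ hk
    rw [Matrix.mul_apply, Finset.sum_eq_single k]
    · simp [Matrix.diagonal_apply, Function.comp, hrest k hk]
    · intro l _ hl; simp [Matrix.diagonal_apply_ne _ hl]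
    · intro hmem; exact absurd (Finset.mem_univ _) hmem
  · intro hmem; exact absurd (Finset.mem_univ _) hmem

end Purity

section RankOne

variable {ι : Type*} [Fintype ι] [DecidableEq ι]

lemma rank_one_factor (M : Matrix ι ι ℂ) (u : ι → ℂ)
    (h : ∀ p q, (M * Mᴴ) p q = u p * star (u q)) (hu : ∃ p, u p ≠ 0) :
    ∃ b : ι → ℂ, ∀ p q, M p q = u p * b q := by
  have key : ∀ i k j, u i * M k j = u k * M i j := by
    intro i k
    have hz : ∑ j, Complex.normSq (u i * M k j - u k * M i j) = 0 := by
      have expand : ∀ j, Complex.normSq (u i * M k j - u k * M i j) =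
          ((u i * M k j - u k * M i j) * star (u i * M k j - u k * M i j)).re := by
        intro j; rw [Complex.star_def, Complex.mul_conj]; simp
      have hMM : ∀ a b : ι, ∑ j, M a j * star (M b j) = u a * star (u b) := by
        intro a b; rw [← h a b, Matrix.mul_apply]; rfl
      have : (∑ j, (u i * M k j - u k * M i j) * star (u i * M k j - u k * M i j)) = 0 := by
        have e1 : ∀ j, (u i * M k j - u k * M i j) * star (u i * M k j - u k * M i j) =
            (u i * star (u i)) * (M k j * star (M k j))
            - (u i * star (u k)) * (M k j * star (M i j))
            - (u k * star (u i)) * (M i j * star (M k j))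
            + (u k * star (u k)) * (M i j * star (M i j)) := by
          intro j; simp only [star_sub, star_mul']; ring
        rw [Finset.sum_congr rfl (fun j _ => e1 j)]
        simp only [Finset.sum_add_distrib, Finset.sum_sub_distrib, ← Finset.mul_sum]
        rw [hMM k k, hMM k i, hMM i k, hMM i i]
        ring
      rw [Finset.sum_congr rfl (fun j _ => expand j), ← Complex.re_sum, this]
      simp
    intro j
    have hj : Complex.normSq (u i * M k j - u k * M i j) = 0 := by
      have := (Finset.sum_eq_zero_iff_of_nonneg
        (fun j _ => Complex.normSq_nonneg _)).mp hz j (Finset.mem_univ j)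
      exact this
    exact sub_eq_zero.mp (Complex.normSq_eq_zero.mp hj)
  obtain ⟨p0, hp0⟩ := hu
  refine ⟨fun q => M p0 q / u p0, fun p q => ?_⟩
  have := key p p0 q
  field_simp
  linear_combination -this

end RankOne

section Rho
open scoped ComplexOrder

variable {N : ℕ}

lemma star_inv_natCast : star ((N : ℂ)⁻¹) = (N : ℂ)⁻¹ := by
  simp [Complex.star_def]

lemma rhoR_eq_factor (U : Matrix (Fin N × Fin N) (Fin N × Fin N) ℂ) :
    rhoR N U = ((N : ℂ)⁻¹ • reshuffle N U) * ((N : ℂ)⁻¹ • reshuffle N U)ᴴ := by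
  rw [Matrix.conjTranspose_smul, star_inv_natCast, Matrix.smul_mul, Matrix.mul_smul,
    smul_smul, rhoR, sq, mul_inv]

lemma rhoT_eq_factor (U : Matrix (Fin N × Fin N) (Fin N × Fin N) ℂ) :
    rhoT N U = ((N : ℂ)⁻¹ • (swapGate N * ptransp N U)) *
      ((N : ℂ)⁻¹ • (swapGate N * ptransp N U))ᴴ := by
  rw [Matrix.conjTranspose_smul, star_inv_natCast, Matrix.smul_mul, Matrix.mul_smul,
    smul_smul, rhoT, sq, mul_inv]
  congr 1
  rw [Matrix.conjTranspose_mul, swapGate_conjTranspose]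
  noncomm_ring

lemma posSemidef_rhoR (U : Matrix (Fin N × Fin N) (Fin N × Fin N) ℂ) : (rhoR N U).PosSemidef := by
  rw [rhoR_eq_factor]; exact Matrix.posSemidef_self_mul_conjTranspose _

lemma posSemidef_rhoT (U : Matrix (Fin N × Fin N) (Fin N × Fin N) ℂ) : (rhoT N U).PosSemidef := by
  rw [rhoT_eq_factor]; exact Matrix.posSemidef_self_mul_conjTranspose _

lemma trace_rhoR {U : Matrix (Fin N × Fin N) (Fin N × Fin N) ℂ} (hN : N ≠ 0)
    (hU : U ∈ Matrix.unitaryGroup (Fin N × Fin N) ℂ) : (rhoR N U).trace = 1 := by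
  rw [rhoR, Matrix.trace_smul, trace_reshuffle_mul, trace_mul_conjTranspose_of_unitary hU]
  have : ((N : ℂ) ^ 2) ≠ 0 := by
    simp [pow_ne_zero, Nat.cast_ne_zero, hN]
  simp [smul_eq_mul, inv_mul_cancel₀ this]

lemma trace_rhoT {U : Matrix (Fin N × Fin N) (Fin N × Fin N) ℂ} (hN : N ≠ 0)
    (hU : U ∈ Matrix.unitaryGroup (Fin N × Fin N) ℂ) : (rhoT N U).trace = 1 := by
  rw [rhoT, Matrix.trace_smul, Matrix.trace_mul_cycle, ← Matrix.mul_assoc, swapGate_mul_self,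
    Matrix.one_mul, trace_ptransp_mul, trace_mul_conjTranspose_of_unitary hU]
  have : ((N : ℂ) ^ 2) ≠ 0 := by
    simp [pow_ne_zero, Nat.cast_ne_zero, hN]
  simp [smul_eq_mul, inv_mul_cancel₀ this]

end Rho

section Forward
open scoped Kronecker

variable {N : ℕ}

lemma kron_swap_apply (A B : Matrix (Fin N) (Fin N) ℂ) (p q : Fin N × Fin N) :
    ((A ⊗ₖ B) * swapGate N) p q = A p.1 q.2 * B p.2 q.1 := by
  rw [mul_swap_apply]; rfl

lemma conjTranspose_kron (A B : Matrix (Fin N) (Fin N) ℂ) : (A ⊗ₖ B)ᴴ = Aᴴ ⊗ₖ Bᴴ := by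
  ext ⟨i, α⟩ ⟨j, β⟩
  simp [Matrix.conjTranspose_apply, Matrix.kroneckerMap_apply, star_mul', mul_comm]

lemma reshuffle_local_swap (A B : Matrix (Fin N) (Fin N) ℂ) :
    reshuffle N ((A ⊗ₖ B) * swapGate N) = (A ⊗ₖ Bᵀ) * swapGate N := by
  ext ⟨i, j⟩ ⟨α, β⟩
  rw [show reshuffle N ((A ⊗ₖ B) * swapGate N) (i, j) (α, β)
      = ((A ⊗ₖ B) * swapGate N) (i, α) (j, β) from rfl,
    kron_swap_apply, kron_swap_apply]
  rfl

lemma local_swap_unitary_aux {A B : Matrix (Fin N) (Fin N) ℂ}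
    (hA : A * Aᴴ = 1) (hB : Bᴴ * B = 1) :
    ((A ⊗ₖ Bᵀ) * swapGate N) * ((A ⊗ₖ Bᵀ) * swapGate N)ᴴ = 1 := by
  rw [Matrix.conjTranspose_mul, swapGate_conjTranspose, conjTranspose_kron]
  calc (A ⊗ₖ Bᵀ) * swapGate N * (swapGate N * (Aᴴ ⊗ₖ Bᵀᴴ))
      = (A ⊗ₖ Bᵀ) * (swapGate N * swapGate N) * (Aᴴ ⊗ₖ Bᵀᴴ) := by noncomm_ring
    _ = (A ⊗ₖ Bᵀ) * (Aᴴ ⊗ₖ Bᵀᴴ) := by rw [swapGate_mul_self, Matrix.mul_one]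
    _ = (A * Aᴴ) ⊗ₖ (Bᵀ * Bᵀᴴ) := by rw [← Matrix.mul_kronecker_mul]
    _ = 1 := by
        have hBt : (Bᵀ)ᴴ = (Bᴴ)ᵀ := by
          ext i j; simp [Matrix.conjTranspose_apply, Matrix.transpose_apply]
        rw [hA, hBt, ← Matrix.transpose_mul, hB]
        simp [Matrix.one_kronecker_one]

lemma Xpur_local_swap {A B : Matrix (Fin N) (Fin N) ℂ} (hN : N ≠ 0)
    (hA : A ∈ Matrix.unitaryGroup (Fin N) ℂ) (hB : B ∈ Matrix.unitaryGroup (Fin N) ℂ) :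
    ((rhoR N ((A ⊗ₖ B) * swapGate N) * rhoR N ((A ⊗ₖ B) * swapGate N)).trace).re
      = (((N : ℝ) ^ 2)⁻¹) := by
  have hA' : A * Aᴴ = 1 := by
    have := Matrix.mem_unitaryGroup_iff.mp hA; rwa [Matrix.star_eq_conjTranspose] at this
  have hB' : Bᴴ * B = 1 := by
    have := Matrix.mem_unitaryGroup_iff'.mp hB; rwa [Matrix.star_eq_conjTranspose] at this
  have h1 : rhoR N ((A ⊗ₖ B) * swapGate N) = ((N : ℂ) ^ 2)⁻¹ • (1 : Matrix (Fin N × Fin N) (Fin N × Fin N) ℂ) := by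
    rw [rhoR, reshuffle_local_swap, local_swap_unitary_aux hA' hB']
  rw [h1, Matrix.smul_mul, Matrix.mul_smul, Matrix.one_mul, smul_smul, Matrix.trace_smul,
    Matrix.trace_one]
  have hcast : (Fintype.card (Fin N × Fin N) : ℂ) = (N : ℂ) ^ 2 := by simp [sq]
  rw [hcast]
  have hne : ((N : ℂ) ^ 2) ≠ 0 := by simp [pow_ne_zero, Nat.cast_ne_zero, hN]
  rw [smul_eq_mul, mul_assoc, inv_mul_cancel₀ hne, mul_one]
  rw [show ((N : ℂ) ^ 2)⁻¹ = ((((N : ℝ) ^ 2)⁻¹ : ℝ) : ℂ) by push_cast; ring]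
  exact Complex.ofReal_re _

lemma sum_pair_mul_star_eq_card {A : Matrix (Fin N) (Fin N) ℂ} (hA : A * Aᴴ = 1) :
    ∑ z : Fin N × Fin N, A z.1 z.2 * star (A z.1 z.2) = (N : ℂ) := by
  rw [← trace_mul_conjTranspose_self, hA, Matrix.trace_one]
  simp

lemma ptransp_local_swap_apply (A B : Matrix (Fin N) (Fin N) ℂ) (p q : Fin N × Fin N) :
    ptransp N ((A ⊗ₖ B) * swapGate N) p q = A q.1 q.2 * B p.2 p.1 := by
  rw [show ptransp N ((A ⊗ₖ B) * swapGate N) p q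
      = ((A ⊗ₖ B) * swapGate N) (q.1, p.2) (p.1, q.2) from rfl, kron_swap_apply]

lemma rhoT_local_swap_apply {A B : Matrix (Fin N) (Fin N) ℂ} (hA : A * Aᴴ = 1)
    (p q : Fin N × Fin N) :
    rhoT N ((A ⊗ₖ B) * swapGate N) p q
      = ((N : ℂ) ^ 2)⁻¹ * ((N : ℂ) * (B p.1 p.2 * star (B q.1 q.2))) := by
  rw [rhoT, Matrix.smul_apply, mul_swap_apply, swap_mul_apply, smul_eq_mul]
  congr 1
  rw [Matrix.mul_apply]
  have : ∀ r : Fin N × Fin N, ptransp N ((A ⊗ₖ B) * swapGate N) (p.2, p.1) r *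
      (ptransp N ((A ⊗ₖ B) * swapGate N))ᴴ r (q.2, q.1)
      = (A r.1 r.2 * star (A r.1 r.2)) * (B p.1 p.2 * star (B q.1 q.2)) := by
    intro r
    rw [Matrix.conjTranspose_apply, ptransp_local_swap_apply, ptransp_local_swap_apply]
    simp only [star_mul']
    ring
  rw [Finset.sum_congr rfl (fun r _ => this r), ← Finset.sum_mul, sum_pair_mul_star_eq_card hA]

lemma Ypur_local_swap {A B : Matrix (Fin N) (Fin N) ℂ} (hN : N ≠ 0)
    (hA : A ∈ Matrix.unitaryGroup (Fin N) ℂ) (hB : B ∈ Matrix.unitaryGroup (Fin N) ℂ) :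
    ((rhoT N ((A ⊗ₖ B) * swapGate N) * rhoT N ((A ⊗ₖ B) * swapGate N)).trace).re = 1 := by
  have hA' : A * Aᴴ = 1 := by
    have := Matrix.mem_unitaryGroup_iff.mp hA; rwa [Matrix.star_eq_conjTranspose] at this
  have hB' : B * Bᴴ = 1 := by
    have := Matrix.mem_unitaryGroup_iff.mp hB; rwa [Matrix.star_eq_conjTranspose] at this
  set c : ℂ := ((N : ℂ) ^ 2)⁻¹ * (N : ℂ) with hc
  have hentry := rhoT_local_swap_apply (B := B) hA'
  have this1 : ∀ p : Fin N × Fin N,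
      (rhoT N ((A ⊗ₖ B) * swapGate N) * rhoT N ((A ⊗ₖ B) * swapGate N)) p p
        = c ^ 2 * ((B p.1 p.2 * star (B p.1 p.2)) * (N : ℂ)) := by
    intro p
    rw [Matrix.mul_apply]
    have e : ∀ q : Fin N × Fin N, rhoT N ((A ⊗ₖ B) * swapGate N) p q *
        rhoT N ((A ⊗ₖ B) * swapGate N) q p
        = (c ^ 2 * (B p.1 p.2 * star (B p.1 p.2))) * (B q.1 q.2 * star (B q.1 q.2)) := by
      intro q
      rw [hentry p q, hentry q p]
      simp only [star_mul', hc]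
      ring
    rw [Finset.sum_congr rfl (fun q _ => e q), ← Finset.mul_sum,
      sum_pair_mul_star_eq_card hB']
    ring
  have htr : (rhoT N ((A ⊗ₖ B) * swapGate N) * rhoT N ((A ⊗ₖ B) * swapGate N)).trace
      = c ^ 2 * ((N : ℂ) * (N : ℂ)) := by
    rw [Matrix.trace]
    simp only [Matrix.diag_apply]
    calc ∑ p : Fin N × Fin N,
          (rhoT N ((A ⊗ₖ B) * swapGate N) * rhoT N ((A ⊗ₖ B) * swapGate N)) p p
        = ∑ p : Fin N × Fin N, (c ^ 2 * (N : ℂ)) * (B p.1 p.2 * star (B p.1 p.2)) :=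
          Finset.sum_congr rfl (fun p _ => by rw [this1 p]; ring)
      _ = (c ^ 2 * (N : ℂ)) * ∑ p : Fin N × Fin N, (B p.1 p.2 * star (B p.1 p.2)) := by
          rw [Finset.mul_sum]
      _ = _ := by rw [sum_pair_mul_star_eq_card hB']; ring
  have hval : c ^ 2 * ((N : ℂ) * (N : ℂ)) = 1 := by
    rw [hc]
    have hne : (N : ℂ) ≠ 0 := Nat.cast_ne_zero.mpr hN
    field_simp
  rw [htr, hval, Complex.one_re]

end Forward

section Main
open scoped Kronecker

variable {N : ℕ}

lemma gateTyp_local_swap {A B : Matrix (Fin N) (Fin N) ℂ} (hN : 2 ≤ N)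
    (hA : A ∈ Matrix.unitaryGroup (Fin N) ℂ) (hB : B ∈ Matrix.unitaryGroup (Fin N) ℂ) :
    gateTyp N ((A ⊗ₖ B) * swapGate N) = 2 := by
  have hNne : N ≠ 0 := by omega
  have hNR2 : (2 : ℝ) ≤ (N : ℝ) := by exact_mod_cast hN
  have hd : (0 : ℝ) < (N : ℝ) ^ 2 := by positivity
  have hd1 : (0 : ℝ) < (N : ℝ) ^ 2 - 1 := by nlinarith
  unfold gateTyp Xpur Ypur
  rw [Xpur_local_swap hNne hA hB, Ypur_local_swap hNne hA hB]
  field_simp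
  ring

lemma one_mem_ug : (1 : Matrix (Fin N) (Fin N) ℂ) ∈ Matrix.unitaryGroup (Fin N) ℂ := by
  rw [Matrix.mem_unitaryGroup_iff]; simp

lemma swapGate_eq_local : swapGate N = ((1 : Matrix (Fin N) (Fin N) ℂ) ⊗ₖ 1) * swapGate N := by
  rw [Matrix.one_kronecker_one, Matrix.one_mul]

end Main


/-- For a unitary `U` on `ℂ^N ⊗ ℂ^N`, `g_t(U) = 2` iff `U` is locally
equivalent to the swap gate, `U = (A ⊗ B) S`. In particular `g_t(S) = 2` and
`e_p(S) = 0`. -/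
theorem gate_typicality_two_iff_swap (N : ℕ) (hN : 2 ≤ N)
    (U : Matrix (Fin N × Fin N) (Fin N × Fin N) ℂ)
    (hU : U ∈ Matrix.unitaryGroup (Fin N × Fin N) ℂ) :
    (gateTyp N U = 2 ↔
      ∃ A B : Matrix (Fin N) (Fin N) ℂ,
        A ∈ Matrix.unitaryGroup (Fin N) ℂ ∧ B ∈ Matrix.unitaryGroup (Fin N) ℂ ∧
          U = (A ⊗ₖ B) * swapGate N) ∧
    gateTyp N (swapGate N) = 2 ∧ ep N (swapGate N) = 0 := by
  have hNne : N ≠ 0 := by omega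
  have hNC : (N : ℂ) ≠ 0 := Nat.cast_ne_zero.mpr hNne
  have hN2C : ((N : ℂ) ^ 2) ≠ 0 := pow_ne_zero 2 hNC
  have hNR2 : (2 : ℝ) ≤ (N : ℝ) := by exact_mod_cast hN
  have hd : (0 : ℝ) < (N : ℝ) ^ 2 := by positivity
  have hd1 : (0 : ℝ) < (N : ℝ) ^ 2 - 1 := by nlinarith
  refine ⟨⟨?_, ?_⟩, ?_, ?_⟩
  · -- hard direction
    intro hg
    have hXeq : Xpur N U = ((rhoR N U * rhoR N U).trace).re := rfl
    have hYeq : Ypur N U = ((rhoT N U * rhoT N U).trace).re := rfl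
    have htrR := trace_rhoR hNne hU
    have htrT := trace_rhoT hNne hU
    have hXlow : 1 ≤ (N : ℝ) ^ 2 * Xpur N U := by
      rw [hXeq]
      have := card_mul_purity_ge (posSemidef_rhoR U).1 htrR
      rwa [show (Fintype.card (Fin N × Fin N) : ℝ) = (N : ℝ) ^ 2 by simp [sq]] at this
    have hYhigh : Ypur N U ≤ 1 := by
      rw [hYeq]; exact purity_le_one (posSemidef_rhoT U) htrT
    have hcoef : ((N : ℝ) ^ 2 / ((N : ℝ) ^ 2 - 1)) ≠ 0 := by positivity
    have hRHS : ((N : ℝ) ^ 2 / ((N : ℝ) ^ 2 - 1)) * (2 * (((N : ℝ) ^ 2 - 1) / (N : ℝ) ^ 2)) = 2 := by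
      field_simp
    have hYX : Ypur N U - Xpur N U + ((N : ℝ) ^ 2 - 1) / (N : ℝ) ^ 2
        = 2 * (((N : ℝ) ^ 2 - 1) / (N : ℝ) ^ 2) := by
      apply mul_left_cancel₀ hcoef
      unfold gateTyp at hg
      rw [← hRHS] at hg
      exact hg
    have hxlow' : 1 / (N : ℝ) ^ 2 ≤ Xpur N U := by
      rw [div_le_iff₀ hd]
      nlinarith [hXlow]
    have he1 : ((N : ℝ) ^ 2 - 1) / (N : ℝ) ^ 2 = 1 - 1 / (N : ℝ) ^ 2 := by field_simp
    have hY1r : Ypur N U = 1 := by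
      rw [he1] at hYX
      linarith
    rw [hYeq] at hY1r
    obtain ⟨w, hw⟩ := purity_eq_one_rank_one (posSemidef_rhoT U) htrT hY1r
    have hgg : ∀ a b : Fin N × Fin N, (ptransp N U * (ptransp N U)ᴴ) a b
        = ((N : ℂ) * w (a.2, a.1)) * star ((N : ℂ) * w (b.2, b.1)) := by
      rintro ⟨a1, a2⟩ ⟨b1, b2⟩
      have h1 : rhoT N U (a2, a1) (b2, b1) = w (a2, a1) * star (w (b2, b1)) := by
        rw [hw, Matrix.vecMulVec_apply]; rfl
      have h2 : rhoT N U (a2, a1) (b2, b1)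
          = ((N : ℂ) ^ 2)⁻¹ * (ptransp N U * (ptransp N U)ᴴ) (a1, a2) (b1, b2) := by
        rw [rhoT, Matrix.smul_apply, mul_swap_apply, swap_mul_apply, smul_eq_mul]
      rw [h2] at h1
      have h3 : (ptransp N U * (ptransp N U)ᴴ) (a1, a2) (b1, b2)
          = (N : ℂ) ^ 2 * (w (a2, a1) * star (w (b2, b1))) := by
        rw [← h1]
        field_simp
      rw [h3, star_mul', star_natCast]
      ring
    have hune : ∃ p : Fin N × Fin N, (N : ℂ) * w (p.2, p.1) ≠ 0 := by
      by_contra hc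
      push_neg at hc
      have hz : (ptransp N U * (ptransp N U)ᴴ).trace = 0 := by
        rw [Matrix.trace]
        simp only [Matrix.diag_apply]
        refine Finset.sum_eq_zero fun a _ => ?_
        rw [hgg a a, hc a, zero_mul]
      rw [trace_ptransp_mul, trace_mul_conjTranspose_of_unitary hU] at hz
      exact hN2C hz
    obtain ⟨b, hb⟩ := rank_one_factor (ptransp N U) (fun p => (N : ℂ) * w (p.2, p.1)) hgg hune
    set A0 : Matrix (Fin N) (Fin N) ℂ := Matrix.of fun i β => b (i, β) with hA0def
    set B0 : Matrix (Fin N) (Fin N) ℂ := Matrix.of fun α j => (N : ℂ) * w (α, j) with hB0def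
    have hU_eq : U = (A0 ⊗ₖ B0) * swapGate N := by
      ext ⟨i, α⟩ ⟨j, β⟩
      rw [kron_swap_apply]
      have h4 : U (i, α) (j, β) = ptransp N U (j, α) (i, β) := rfl
      rw [h4, hb (j, α) (i, β)]
      simp only [hA0def, hB0def, Matrix.of_apply]
      ring
    have hK : (A0 ⊗ₖ B0) * (A0 ⊗ₖ B0)ᴴ = 1 := by
      have hAB : A0 ⊗ₖ B0 = U * swapGate N := by
        rw [hU_eq, Matrix.mul_assoc, swapGate_mul_self, Matrix.mul_one]
      have hUU : U * Uᴴ = 1 := by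
        have := Matrix.mem_unitaryGroup_iff.mp hU
        rwa [Matrix.star_eq_conjTranspose] at this
      rw [hAB, Matrix.conjTranspose_mul, swapGate_conjTranspose]
      calc U * swapGate N * (swapGate N * Uᴴ)
          = U * (swapGate N * swapGate N) * Uᴴ := by noncomm_ring
        _ = U * Uᴴ := by rw [swapGate_mul_self, Matrix.mul_one]
        _ = 1 := hUU
    have hkk : ((A0 * A0ᴴ) ⊗ₖ (B0 * B0ᴴ)) = (1 : Matrix (Fin N × Fin N) (Fin N × Fin N) ℂ) := by
      rw [Matrix.mul_kronecker_mul, ← conjTranspose_kron, hK]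
    have hPQ : ∀ (i i' α α' : Fin N), (A0 * A0ᴴ) i i' * (B0 * B0ᴴ) α α'
        = if i = i' ∧ α = α' then 1 else 0 := by
      intro i i' α α'
      have h5 := congrFun (congrFun hkk (i, α)) (i', α')
      simpa [Matrix.kroneckerMap_apply, Matrix.one_apply, Prod.ext_iff] using h5
    have i0 : Fin N := ⟨0, by omega⟩
    set t := (B0 * B0ᴴ) i0 i0 with htdef
    have ht1 : (A0 * A0ᴴ) i0 i0 * t = 1 := by simpa using hPQ i0 i0 i0 i0
    have htne : t ≠ 0 := by
      intro h; rw [h, mul_zero] at ht1; exact zero_ne_one ht1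
    have hPmat : A0 * A0ᴴ = t⁻¹ • (1 : Matrix (Fin N) (Fin N) ℂ) := by
      ext i i'
      have h6 := hPQ i i' i0 i0
      by_cases hii : i = i'
      · subst hii
        rw [if_pos ⟨rfl, rfl⟩, ← htdef] at h6
        rw [Matrix.smul_apply, Matrix.one_apply, if_pos rfl, smul_eq_mul, mul_one]
        field_simp
        linear_combination h6
      · rw [if_neg (by simp [hii]), ← htdef] at h6
        rw [Matrix.smul_apply, Matrix.one_apply, if_neg hii, smul_eq_mul, mul_zero]
        exact (mul_eq_zero.mp h6).resolve_right htne
    have hP00 : (A0 * A0ᴴ) i0 i0 = t⁻¹ := by rw [hPmat]; simp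
    have hQmat : B0 * B0ᴴ = t • (1 : Matrix (Fin N) (Fin N) ℂ) := by
      ext α α'
      have h7 := hPQ i0 i0 α α'
      rw [hP00] at h7
      by_cases hαα : α = α'
      · subst hαα
        rw [if_pos ⟨rfl, rfl⟩] at h7
        rw [Matrix.smul_apply, Matrix.one_apply, if_pos rfl, smul_eq_mul, mul_one]
        exact ((inv_mul_eq_one₀ htne).mp h7).symm
      · rw [if_neg (by simp [hαα])] at h7
        rw [Matrix.smul_apply, Matrix.one_apply, if_neg hαα, smul_eq_mul, mul_zero]
        exact (mul_eq_zero.mp h7).resolve_left (inv_ne_zero htne)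
    have htreal : ∃ r : ℝ, 0 < r ∧ t = (r : ℂ) := by
      have hform : t = ((∑ γ, Complex.normSq (B0 i0 γ) : ℝ) : ℂ) := by
        rw [htdef, Matrix.mul_apply]
        push_cast
        refine Finset.sum_congr rfl fun γ _ => ?_
        rw [Matrix.conjTranspose_apply, Complex.star_def, Complex.mul_conj]
      have hge : (0 : ℝ) ≤ ∑ γ, Complex.normSq (B0 i0 γ) :=
        Finset.sum_nonneg fun γ _ => Complex.normSq_nonneg _
      refine ⟨_, lt_of_le_of_ne hge ?_, hform⟩
      intro h0
      apply htne
      rw [hform, ← h0]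
      simp
    obtain ⟨r, hr, htr_eq⟩ := htreal
    set s := Real.sqrt r with hsdef
    have hs0 : (0 : ℝ) < s := Real.sqrt_pos.mpr hr
    have hss : s * s = r := Real.mul_self_sqrt hr.le
    have hsC : ((s : ℝ) : ℂ) ≠ 0 := by exact_mod_cast hs0.ne'
    refine ⟨((s : ℝ) : ℂ) • A0, (((s : ℝ) : ℂ))⁻¹ • B0, ?_, ?_, ?_⟩
    · rw [Matrix.mem_unitaryGroup_iff, Matrix.star_eq_conjTranspose, Matrix.conjTranspose_smul,
        Matrix.smul_mul, Matrix.mul_smul, smul_smul, hPmat, htr_eq, smul_smul]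
      have hone : ((s : ℝ) : ℂ) * (star ((s : ℝ) : ℂ)) * (((r : ℝ) : ℂ))⁻¹ = 1 := by
        rw [Complex.star_def, Complex.conj_ofReal, ← Complex.ofReal_mul, hss]
        exact mul_inv_cancel₀ (by exact_mod_cast hr.ne')
      rw [hone, one_smul]
    · rw [Matrix.mem_unitaryGroup_iff, Matrix.star_eq_conjTranspose, Matrix.conjTranspose_smul,
        Matrix.smul_mul, Matrix.mul_smul, smul_smul, hQmat, htr_eq, smul_smul]
      have hone : (((s : ℝ) : ℂ))⁻¹ * (star ((((s : ℝ) : ℂ))⁻¹)) * ((r : ℝ) : ℂ) = 1 := by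
        rw [star_inv₀, Complex.star_def, Complex.conj_ofReal]
        rw [show ((r : ℝ) : ℂ) = ((s : ℝ) : ℂ) * ((s : ℝ) : ℂ) by rw [← Complex.ofReal_mul, hss]]
        field_simp
      rw [hone, one_smul]
    · rw [Matrix.smul_kronecker, Matrix.kronecker_smul, smul_smul,
        mul_inv_cancel₀ hsC, one_smul]
      exact hU_eq
  · rintro ⟨A, B, hA, hB, rfl⟩
    exact gateTyp_local_swap hN hA hB
  · rw [swapGate_eq_local]
    exact gateTyp_local_swap hN one_mem_ug one_mem_ug
  · rw [swapGate_eq_local]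
    unfold ep Xpur Ypur
    rw [Xpur_local_swap hNne one_mem_ug one_mem_ug, Ypur_local_swap hNne one_mem_ug one_mem_ug]
    have hz : (1 - ((N : ℝ) ^ 2)⁻¹) + (1 - 1) - ((N : ℝ) ^ 2 - 1) / (N : ℝ) ^ 2 = 0 := by
      field_simp
      ring
    rw [hz, mul_zero]
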